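/- Let a1, a3 be real with a1 ≠ 0, a1 ≠ -1, and a3^2 + 4*(1+a1) < 0, and set D = -a3^2 - 4*(1+a1) > 0. On the open region U = {(x,y) in R^2 : 1 + a1*x > 0 and x ≠ 1}, the function F(x,y) = -(1/(2*a1*(1+a1))) * { 2*log(1+a1*x) + a1*log| (1+a1)*y^2 - a3*y*(x-1) - (x-1)^2 | - (2*a1*a3*(x-1)/(|x-1|*sqrt(D))) * arctan[ (a3*(x-1) - 2*(1+a1)*y) / (|x-1|*sqrt(D)) ] } is a first integral of the Lotka–Volterra system Q3^LV given by dx/dt = y*(1+a1*x), dy/dt = -x + x^2 + a3*x*y - y^2; that is, y*(1+a1*x)*∂F/∂x(x,y) + (-x + x^2 + a3*x*y - y^2)*∂F/∂y(x,y) = 0 for all (x,y) in U. (On U the quadratic (1+a1)*y^2 - a3*y*(x-1) - (x-1)^2 is nonzero, since a3^2+4*(1+a1)<0 makes it negative definite in (x-1, y).) -/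

import Mathlib

set_option maxHeartbeats 2000000

open Real Filter

private lemma Qneg_aux (a1 a3 : ℝ) (hA1 : 1 + a1 < 0) (hneg : a3^2 + 4*(1 + a1) < 0)
    {x y : ℝ} (hx : x ≠ 1) :
    (1 + a1)*y^2 - a3*y*(x - 1) - (x - 1)^2 < 0 := by
  have hu : x - 1 ≠ 0 := sub_ne_zero.mpr hx
  have h2 : 0 < (x - 1)^2 := by rw [← sq_abs]; exact pow_pos (abs_pos.mpr hu) 2
  nlinarith [sq_nonneg (2*(1 + a1)*y - a3*(x - 1)), mul_pos (neg_pos.mpr hneg) h2]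

private lemma derivX_aux (a1 a3 r s x y : ℝ) (h0 : a1 ≠ 0) (hA1 : 1 + a1 < 0)
    (hr : 0 < r) (hrr : r^2 = -a3^2 - 4*(1 + a1)) (hs : s = 1 ∨ s = -1)
    (hx : 0 < 1 + a1*x) (hx1 : x ≠ 1)
    (hev : ∀ᶠ x' in nhds x, 0 < 1 + a1*x' ∧ |x' - 1| = s*(x' - 1) ∧ x' ≠ 1)
    (F : ℝ → ℝ → ℝ)
    (hF : ∀ X Y : ℝ, F X Y = -(1/(2*a1*(1 + a1))) *
      (2 * Real.log (1 + a1*X)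
        + a1 * Real.log |(1 + a1)*Y^2 - a3*Y*(X - 1) - (X - 1)^2|
        - (2*a1*a3*(X - 1)/(|X - 1| * r)) *
            Real.arctan ((a3*(X - 1) - 2*(1 + a1)*Y)/(|X - 1| * r)))) :
    deriv (fun x' => F x' y) x
      = -(1/(1 + a1)) * (1/(1 + a1*x)
          - (a3*y + (x - 1))/((1 + a1)*y^2 - a3*y*(x - 1) - (x - 1)^2)) := by
  have hneg : a3^2 + 4*(1 + a1) < 0 := by nlinarith [pow_pos hr 2]
  have hsne : s ≠ 0 := by rcases hs with rfl | rfl <;> norm_num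
  have hu1 : x - 1 ≠ 0 := sub_ne_zero.mpr hx1
  have hQ : (1 + a1)*y^2 - a3*y*(x - 1) - (x - 1)^2 < 0 := Qneg_aux a1 a3 hA1 hneg hx1
  have hQne : (1 + a1)*y^2 - a3*y*(x - 1) - (x - 1)^2 ≠ 0 := ne_of_lt hQ
  have hFG : (fun x' => F x' y) =ᶠ[nhds x] (fun x' =>
      -(1/(2*a1*(1 + a1))) *
      (2 * Real.log (1 + a1*x')
        + a1 * Real.log (-((1 + a1)*y^2 - a3*y*(x' - 1) - (x' - 1)^2))
        - (2*a1*a3/(s*r)) *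
            Real.arctan ((a3*(x' - 1) - 2*(1 + a1)*y)/(s*(x' - 1)*r)))) := by
    filter_upwards [hev] with x' hx'
    obtain ⟨h1, h2, h3⟩ := hx'
    have hu' : x' - 1 ≠ 0 := sub_ne_zero.mpr h3
    have hq' := Qneg_aux a1 a3 hA1 hneg h3 (y := y)
    rw [hF, abs_of_neg hq', h2,
        show 2*a1*a3*(x' - 1)/(s*(x' - 1)*r) = 2*a1*a3/(s*r) from by
          rw [show 2*a1*a3*(x' - 1) = (x' - 1)*(2*a1*a3) from by ring,
              show s*(x' - 1)*r = (x' - 1)*(s*r) from by ring,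
              mul_div_mul_left _ _ hu']]
  rw [hFG.deriv_eq]
  have hu : HasDerivAt (fun x' : ℝ => x' - 1) 1 x := (hasDerivAt_id x).sub_const 1
  have hlin : HasDerivAt (fun x' : ℝ => 1 + a1*x') a1 x := by
    simpa using ((hasDerivAt_id x).const_mul a1).const_add 1
  have hlog1 : HasDerivAt (fun x' => Real.log (1 + a1*x')) (a1/(1 + a1*x)) x := by
    simpa using hlin.log (ne_of_gt hx)
  have hQpoly : HasDerivAt
      (fun x' : ℝ => -((1 + a1)*y^2 - a3*y*(x' - 1) - (x' - 1)^2))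
      (a3*y + 2*(x - 1)) x := by
    have h2 : HasDerivAt (fun x' : ℝ => (1 + a1)*y^2 - a3*y*(x' - 1) - (x' - 1)^2)
        (0 - a3*y*1 - ((2:ℕ) * (x - 1)^(2-1) * 1)) x :=
      ((hasDerivAt_const x ((1 + a1)*y^2)).sub (hu.const_mul (a3*y))).sub (hu.pow 2)
    refine h2.neg.congr_deriv ?_
    push_cast
    ring
  have hQneg' : -((1 + a1)*y^2 - a3*y*(x - 1) - (x - 1)^2) ≠ 0 := by
    exact neg_ne_zero.mpr hQne
  have hlog2 := hQpoly.log hQneg'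
  have hA : HasDerivAt (fun x' : ℝ => a3*(x' - 1) - 2*(1 + a1)*y) a3 x := by
    simpa using (hu.const_mul a3).sub_const (2*(1 + a1)*y)
  have hden : HasDerivAt (fun x' : ℝ => s*(x' - 1)*r) (s*1*r) x :=
    (hu.const_mul s).mul_const r
  have hdenne : s*(x - 1)*r ≠ 0 := mul_ne_zero (mul_ne_zero hsne hu1) (ne_of_gt hr)
  have hv : HasDerivAt (fun x' : ℝ => (a3*(x' - 1) - 2*(1 + a1)*y)/(s*(x' - 1)*r)) _ x :=
    hA.div hden hdenne
  have harc := hv.arctan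
  have hG := (((hlog1.const_mul 2).add (hlog2.const_mul a1)).sub
      (harc.const_mul (2*a1*a3/(s*r)))).const_mul (-(1/(2*a1*(1 + a1))))
  erw [hG.deriv]
  set u := x - 1 with hu_def
  set A := a3*u - 2*(1 + a1)*y with hA_def
  set Qq := (1 + a1)*y^2 - a3*y*u - u^2 with hQ_def
  set W := u^2*r^2 + A^2 with hW_def
  clear_value u A Qq W
  have hWpos : 0 < W := by
    rw [hW_def]
    have h2 : 0 < u^2 := by rw [← sq_abs]; exact pow_pos (abs_pos.mpr hu1) 2
    nlinarith [sq_nonneg A, pow_pos hr 2]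
  have hWne := ne_of_gt hWpos
  have hW4 : W = (4*(1 + a1))*Qq := by
    rw [hW_def, hA_def, hQ_def]
    linear_combination u^2 * hrr
  have hvne : 1 + (A/(s*u*r))^2 ≠ 0 := by positivity
  have hA1ne : (1:ℝ) + a1 ≠ 0 := ne_of_lt hA1
  have hrne := ne_of_gt hr
  have e1 : 1 / (1 + (A/(s*u*r))^2) * ((a3*(s*u*r) - A*(s*1*r))/(s*u*r)^2)
      = s*r*(a3*u - A)/W := by
    rw [hW_def] at hWne ⊢
    rcases hs with rfl | rfl <;>
    · field_simp
      try ring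
  rw [e1]
  have e2 : 2*a1*a3/(s*r) * (s*r*(a3*u - A)/W) = a1*a3*y/Qq := by
    rw [hW4, hA_def]
    field_simp
    ring
  rw [e2]
  field_simp
  ring


private lemma derivY_aux (a1 a3 r s x y : ℝ) (h0 : a1 ≠ 0) (hA1 : 1 + a1 < 0)
    (hr : 0 < r) (hrr : r^2 = -a3^2 - 4*(1 + a1)) (hs : s = 1 ∨ s = -1)
    (hx : 0 < 1 + a1*x) (hx1 : x ≠ 1)
    (habs : |x - 1| = s*(x - 1))
    (F : ℝ → ℝ → ℝ)
    (hF : ∀ X Y : ℝ, F X Y = -(1/(2*a1*(1 + a1))) *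
      (2 * Real.log (1 + a1*X)
        + a1 * Real.log |(1 + a1)*Y^2 - a3*Y*(X - 1) - (X - 1)^2|
        - (2*a1*a3*(X - 1)/(|X - 1| * r)) *
            Real.arctan ((a3*(X - 1) - 2*(1 + a1)*Y)/(|X - 1| * r)))) :
    deriv (fun y' => F x y') y
      = -y / ((1 + a1)*y^2 - a3*y*(x - 1) - (x - 1)^2) := by
  have hneg : a3^2 + 4*(1 + a1) < 0 := by nlinarith [pow_pos hr 2]
  have hsne : s ≠ 0 := by rcases hs with rfl | rfl <;> norm_num
  have hu1 : x - 1 ≠ 0 := sub_ne_zero.mpr hx1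
  have hQ : (1 + a1)*y^2 - a3*y*(x - 1) - (x - 1)^2 < 0 := Qneg_aux a1 a3 hA1 hneg hx1
  have hQne : (1 + a1)*y^2 - a3*y*(x - 1) - (x - 1)^2 ≠ 0 := ne_of_lt hQ
  have hfun : (fun y' => F x y') = (fun y' =>
      -(1/(2*a1*(1 + a1))) *
      (2 * Real.log (1 + a1*x)
        + a1 * Real.log (-((1 + a1)*y'^2 - a3*y'*(x - 1) - (x - 1)^2))
        - (2*a1*a3/(s*r)) *
            Real.arctan ((a3*(x - 1) - 2*(1 + a1)*y')/(s*(x - 1)*r)))) := by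
    funext y'
    have hq' := Qneg_aux a1 a3 hA1 hneg hx1 (y := y')
    rw [hF, abs_of_neg hq', habs,
        show 2*a1*a3*(x - 1)/(s*(x - 1)*r) = 2*a1*a3/(s*r) from by
          rw [show 2*a1*a3*(x - 1) = (x - 1)*(2*a1*a3) from by ring,
              show s*(x - 1)*r = (x - 1)*(s*r) from by ring,
              mul_div_mul_left _ _ hu1]]
  rw [hfun]
  have hid : HasDerivAt (fun y' : ℝ => y') 1 y := hasDerivAt_id y
  have hQy : HasDerivAt
      (fun y' : ℝ => -((1 + a1)*y'^2 - a3*y'*(x - 1) - (x - 1)^2))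
      (a3*(x - 1) - 2*(1 + a1)*y) y := by
    have h2 : HasDerivAt (fun y' : ℝ => (1 + a1)*y'^2 - a3*y'*(x - 1) - (x - 1)^2)
        ((1 + a1)*((2:ℕ)*y^(2-1)*1) - a3*1*(x - 1) - 0) y :=
      (((hid.pow 2).const_mul (1 + a1)).sub ((hid.const_mul a3).mul_const (x - 1))).sub
        (hasDerivAt_const y ((x - 1)^2))
    refine h2.neg.congr_deriv ?_
    push_cast
    ring
  have hQneg' : -((1 + a1)*y^2 - a3*y*(x - 1) - (x - 1)^2) ≠ 0 := neg_ne_zero.mpr hQne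
  have hlogy := hQy.log hQneg'
  have hAy : HasDerivAt (fun y' : ℝ => a3*(x - 1) - 2*(1 + a1)*y') (-(2*(1 + a1))) y := by
    simpa using (hid.const_mul (2*(1 + a1))).const_sub (a3*(x - 1))
  have hvy := hAy.div_const (s*(x - 1)*r)
  have harcy := hvy.arctan
  have hG2 := (((hasDerivAt_const y (2 * Real.log (1 + a1*x))).add
      (hlogy.const_mul a1)).sub
      (harcy.const_mul (2*a1*a3/(s*r)))).const_mul (-(1/(2*a1*(1 + a1))))
  erw [hG2.deriv]
  set u := x - 1 with hu_def
  set A := a3*u - 2*(1 + a1)*y with hA_def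
  set Qq := (1 + a1)*y^2 - a3*y*u - u^2 with hQ_def
  set W := u^2*r^2 + A^2 with hW_def
  clear_value u A Qq W
  have hWpos : 0 < W := by
    rw [hW_def]
    have h2 : 0 < u^2 := by rw [← sq_abs]; exact pow_pos (abs_pos.mpr hu1) 2
    nlinarith [sq_nonneg A, pow_pos hr 2]
  have hWne := ne_of_gt hWpos
  have hW4 : W = (4*(1 + a1))*Qq := by
    rw [hW_def, hA_def, hQ_def]
    linear_combination u^2 * hrr
  have hA1ne : (1:ℝ) + a1 ≠ 0 := ne_of_lt hA1
  have hrne := ne_of_gt hr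
  have e1 : 1 / (1 + (A/(s*u*r))^2) * (-(2*(1 + a1))/(s*u*r))
      = -(2*(1 + a1))*(s*u*r)/W := by
    rw [hW_def] at hWne ⊢
    rcases hs with rfl | rfl <;>
    · field_simp
      try ring
  rw [e1]
  have e2 : 2*a1*a3/(s*r) * (-(2*(1 + a1))*(s*u*r)/W) = -(a1*a3*u)/Qq := by
    rw [hW4]
    field_simp
    ring
  rw [e2]
  rw [hA_def]
  field_simp
  ring

theorem stmt_4 (a1 a3 : ℝ) (h0 : a1 ≠ 0) (h1 : a1 ≠ -1)
    (hneg : a3^2 + 4*(1 + a1) < 0)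
    (D : ℝ) (hD : D = -a3^2 - 4*(1 + a1))
    (F : ℝ → ℝ → ℝ)
    (hF : ∀ x y : ℝ, F x y = -(1/(2*a1*(1 + a1))) *
      (2 * Real.log (1 + a1*x)
        + a1 * Real.log |(1 + a1)*y^2 - a3*y*(x - 1) - (x - 1)^2|
        - (2*a1*a3*(x - 1)/(|x - 1| * Real.sqrt D)) *
            Real.arctan ((a3*(x - 1) - 2*(1 + a1)*y)/(|x - 1| * Real.sqrt D)))) :
    0 < D ∧
    ∀ x y : ℝ, 1 + a1*x > 0 → x ≠ 1 →
      y*(1 + a1*x) * deriv (fun x' => F x' y) x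
        + (-x + x^2 + a3*x*y - y^2) * deriv (fun y' => F x y') y = 0 := by
  have hA1 : 1 + a1 < 0 := by nlinarith [sq_nonneg a3]
  have hDpos : 0 < D := by rw [hD]; linarith
  refine ⟨hDpos, fun x y hx hx1 => ?_⟩
  have hr : 0 < Real.sqrt D := Real.sqrt_pos.mpr hDpos
  have hrr : (Real.sqrt D)^2 = -a3^2 - 4*(1 + a1) := by
    rw [Real.sq_sqrt hDpos.le, hD]
  have hA1ne : (1:ℝ) + a1 ≠ 0 := ne_of_lt hA1
  have hQ : (1 + a1)*y^2 - a3*y*(x - 1) - (x - 1)^2 < 0 := Qneg_aux a1 a3 hA1 hneg hx1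
  have hQne : (1 + a1)*y^2 - a3*y*(x - 1) - (x - 1)^2 ≠ 0 := ne_of_lt hQ
  have hxne : (1 + a1*x) ≠ 0 := ne_of_gt hx
  have hc : Continuous fun x' : ℝ => 1 + a1*x' := by continuity
  have h1ev : ∀ᶠ x' in nhds x, 0 < 1 + a1*x' :=
    (hc.tendsto x).eventually (eventually_gt_nhds hx)
  rcases hx1.lt_or_gt with hlt | hgt
  · have habs : |x - 1| = -1 * (x - 1) := by
      rw [abs_of_neg (by linarith : x - 1 < 0)]; ring
    have hev : ∀ᶠ x' in nhds x, 0 < 1 + a1*x' ∧ |x' - 1| = -1*(x' - 1) ∧ x' ≠ 1 := by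
      filter_upwards [h1ev, eventually_lt_nhds hlt] with x' p q
      exact ⟨p, by rw [abs_of_neg (by linarith : x' - 1 < 0)]; ring, ne_of_lt q⟩
    rw [derivX_aux a1 a3 _ (-1) x y h0 hA1 hr hrr (Or.inr rfl) hx hx1 hev F hF,
        derivY_aux a1 a3 _ (-1) x y h0 hA1 hr hrr (Or.inr rfl) hx hx1 habs F hF]
    field_simp [hQne, hxne, hA1ne]
    have hQ2 : y * (y * (1 + a1) - a3 * (x - 1)) - (x - 1) ^ 2 ≠ 0 := by
      convert hQne using 1; ring
    field_simp
    ring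
  · have habs : |x - 1| = 1 * (x - 1) := by
      rw [abs_of_pos (by linarith : 0 < x - 1)]; ring
    have hev : ∀ᶠ x' in nhds x, 0 < 1 + a1*x' ∧ |x' - 1| = 1*(x' - 1) ∧ x' ≠ 1 := by
      filter_upwards [h1ev, eventually_gt_nhds hgt] with x' p q
      exact ⟨p, by rw [abs_of_pos (by linarith : 0 < x' - 1)]; ring, ne_of_gt q⟩
    rw [derivX_aux a1 a3 _ 1 x y h0 hA1 hr hrr (Or.inl rfl) hx hx1 hev F hF,
        derivY_aux a1 a3 _ 1 x y h0 hA1 hr hrr (Or.inl rfl) hx hx1 habs F hF]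
    field_simp [hQne, hxne, hA1ne]
    have hQ2 : y * (y * (1 + a1) - a3 * (x - 1)) - (x - 1) ^ 2 ≠ 0 := by
      convert hQne using 1; ring
    field_simp
    ring
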